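/- (Billingsley–Topsøe, sufficiency) Let H be a separable real Hilbert space, S a Borel subset of H, and F a family of Borel-measurable functions from S to H such that: (i) sup{‖f(z) − f(t)‖ : f ∈ F, z, t ∈ S} < ∞, and (ii) for every ε > 0, lim_{δ → 0⁺} sup_{f ∈ F} P({x ∈ S : ω_f(B(x, δ)) ≥ ε}) = 0, where ω_f(A) = sup{‖f(x) − f(y)‖ : x, y ∈ A} and B(x, δ) is the open ball of radius δ (the sets in (ii) being assumed measurable). Then for every sequence (P_n) of Borel probability measures on S converging weakly to P, sup_{f ∈ F} ‖∫_S f dP_n − ∫_S f dP‖ → 0 as n → ∞, where the integrals are Bochner integrals. -/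

import Mathlib

open MeasureTheory Filter Topology Set
open scoped ENNReal

lemma bt_null_frontier_biUnion {X : Type*} [TopologicalSpace X] [MeasurableSpace X]
    (μ : Measure X) (E : ℕ → Set X) (h : ∀ m, μ (frontier (E m)) = 0) (k : ℕ) :
    μ (frontier (⋃ m ∈ Finset.range k, E m)) = 0 := by
  induction k with
  | zero => simp
  | succ k ih =>
    rw [Finset.range_add_one]
    simp only [Finset.mem_insert, Set.iUnion_iUnion_eq_or_left]
    refine measure_mono_null ((frontier_union_subset _ _).trans
      (Set.union_subset_union Set.inter_subset_left Set.inter_subset_right))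
      (measure_union_null (h k) ih)

/-- Existence of a countable partition into small-diameter null-frontier measurable sets. -/
lemma bt_partition {X : Type*} [MetricSpace X] [MeasurableSpace X] [BorelSpace X]
    [SecondCountableTopology X] [Nonempty X] (μ : Measure X) [IsFiniteMeasure μ]
    {δ : ℝ} (hδ : 0 < δ) :
    ∃ E : ℕ → Set X, (∀ m, MeasurableSet (E m)) ∧
      (∀ l m, l < m → Disjoint (E l) (E m)) ∧
      (⋃ m, E m) = univ ∧
      (∀ m, μ (frontier (E m)) = 0) ∧
      (∀ m, ∀ z ∈ E m, ∀ t ∈ E m, dist z t < δ) := by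
  classical
  obtain ⟨u, hu⟩ := TopologicalSpace.exists_dense_seq X
  have hrad : ∀ m : ℕ, ∃ r ∈ Set.Ioo (δ/3) (δ/2),
      μ (frontier (Metric.ball (u m) r)) = 0 := by
    intro m
    obtain ⟨r, hr, hr0⟩ := exists_null_frontier_thickening μ {u m} (by linarith : δ/3 < δ/2)
    exact ⟨r, hr, by rwa [Metric.thickening_singleton] at hr0⟩
  choose r hr hrnull using hrad
  set B : ℕ → Set X := fun m => Metric.ball (u m) (r m) with hB
  have hcov : ∀ x : X, ∃ m, x ∈ B m := by
    intro x
    obtain ⟨m, hm⟩ := hu.exists_dist_lt x (by linarith : (0:ℝ) < δ/3)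
    exact ⟨m, by simp only [hB, Metric.mem_ball, dist_comm]; exact hm.trans (hr m).1⟩
  refine ⟨fun m => B m \ ⋃ l ∈ Finset.range m, B l, ?_, ?_, ?_, ?_, ?_⟩
  · intro m
    exact measurableSet_ball.diff (Finset.measurableSet_biUnion _ fun _ _ => measurableSet_ball)
  · intro l m hlm
    refine Set.disjoint_left.2 fun x hx hx' => ?_
    exact hx'.2 (Set.mem_biUnion (Finset.mem_range.2 hlm) hx.1)
  · refine Set.eq_univ_of_forall fun x => ?_
    have h := Nat.find_spec (hcov x)
    refine Set.mem_iUnion.2 ⟨Nat.find (hcov x), h, fun hx => ?_⟩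
    obtain ⟨l, hl, hxl⟩ := Set.mem_iUnion₂.1 hx
    exact absurd hxl (Nat.find_min (hcov x) (Finset.mem_range.1 hl))
  · intro m
    have h1 : frontier (B m \ ⋃ l ∈ Finset.range m, B l) ⊆
        frontier (B m) ∪ frontier (⋃ l ∈ Finset.range m, B l) := by
      rw [Set.diff_eq]
      refine (frontier_inter_subset _ _).trans ?_
      rw [frontier_compl]
      exact Set.union_subset_union Set.inter_subset_left Set.inter_subset_right
    exact measure_mono_null h1
      (measure_union_null (hrnull m) (bt_null_frontier_biUnion μ B (fun l => hrnull l) m))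
  · intro m z hz t ht
    have hz' := hz.1; have ht' := ht.1
    simp only [hB, Metric.mem_ball] at hz' ht'
    calc dist z t ≤ dist z (u m) + dist (u m) t := dist_triangle _ _ _
      _ < r m + r m := by rw [dist_comm (u m) t]; exact add_lt_add hz' ht'
      _ < δ := by have := (hr m).2; linarith

/-- Billingsley–Topsøe theorem (sufficiency direction): a uniformly bounded family of
measurable functions whose oscillation on small balls is uniformly small in `P`-measure
satisfies the uniform convergence of Bochner integrals along any weakly convergent
sequence of probability measures. -/
theorem stmt10 {H : Type*} [NormedAddCommGroup H] [InnerProductSpace ℝ H]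
    [CompleteSpace H] [SecondCountableTopology H] [MeasurableSpace H] [BorelSpace H]
    (S : Set H) (hS : MeasurableSet S)
    {ι : Type*} (F : ι → S → H) (hFmeas : ∀ i, Measurable (F i))
    -- (i) the family is uniformly bounded in diameter
    (C : ℝ) (hbd : ∀ i, ∀ z t : S, ‖F i z - F i t‖ ≤ C)
    (P : ProbabilityMeasure S) (Pn : ℕ → ProbabilityMeasure S)
    -- (ii) the oscillation condition: for every `ε > 0`,
    -- `lim_{δ → 0⁺} sup_i P {x : ω_{F i}(B(x, δ)) ≥ ε} = 0`
    (hosc : ∀ ε : ℝ, 0 < ε →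
      Tendsto (fun δ : ℝ => ⨆ i, (P : Measure S)
          {x : S | ε ≤ ⨆ z : {z : S // ‖(z : H) - (x : H)‖ < δ},
              ⨆ t : {t : S // ‖(t : H) - (x : H)‖ < δ}, ‖F i (z : S) - F i (t : S)‖})
        (𝓝[>] (0 : ℝ)) (𝓝 0))
    (hweak : Tendsto Pn atTop (𝓝 P)) :
    ∀ ε : ℝ, 0 < ε → ∀ᶠ n in atTop, ∀ i,
      ‖(∫ z, F i z ∂(Pn n : Measure S)) - ∫ z, F i z ∂(P : Measure S)‖ < ε := by
  classical
  rcases isEmpty_or_nonempty ι with hι | hι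
  · exact fun ε hε => Filter.Eventually.of_forall (fun n i => (hι.elim i))
  obtain ⟨i0⟩ := hι
  have hne : Nonempty S := by
    by_contra hemp
    rw [not_nonempty_iff] at hemp
    have h1 : (P : Measure S) Set.univ = 1 := measure_univ
    rw [Set.univ_eq_empty_iff.2 hemp, measure_empty] at h1
    exact zero_ne_one h1
  obtain ⟨x0⟩ := hne
  have hC0 : (0:ℝ) ≤ C := (norm_nonneg (F i0 x0 - F i0 x0)).trans (hbd i0 x0 x0)
  intro ε hε
  set ε₁ := ε/4 with hε₁def
  have hε₁ : 0 < ε₁ := by positivity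
  set η := ε/(16*(C+1)) with hηdef
  have hη : 0 < η := by positivity
  -- choose δ
  obtain ⟨δ, hsupδ, hδpos⟩ :=
    (((hosc ε₁ hε₁).eventually (Iio_mem_nhds (ENNReal.ofReal_pos.2 hη))).and
      self_mem_nhdsWithin).exists
  replace hδpos : (0:ℝ) < δ := hδpos
  replace hsupδ : (⨆ i, (P : Measure S)
      {x : S | ε₁ ≤ ⨆ z : {z : S // ‖(z : H) - (x : H)‖ < δ},
        ⨆ t : {t : S // ‖(t : H) - (x : H)‖ < δ}, ‖F i (z : S) - F i (t : S)‖})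
      < ENNReal.ofReal η := hsupδ
  have hBadP : ∀ i, (P : Measure S)
      {x : S | ε₁ ≤ ⨆ z : {z : S // ‖(z : H) - (x : H)‖ < δ},
        ⨆ t : {t : S // ‖(t : H) - (x : H)‖ < δ}, ‖F i (z : S) - F i (t : S)‖}
      ≤ ENNReal.ofReal η :=
    fun i => le_trans (le_iSup (fun i => (P : Measure S)
      {x : S | ε₁ ≤ ⨆ z : {z : S // ‖(z : H) - (x : H)‖ < δ},
        ⨆ t : {t : S // ‖(t : H) - (x : H)‖ < δ}, ‖F i (z : S) - F i (t : S)‖}) i) hsupδ.le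
  -- partition
  haveI : Nonempty S := ⟨x0⟩
  obtain ⟨E, hEmeas, hEdisj, hEunion, hEfront, hEdiam⟩ :=
    bt_partition (X := S) (P : Measure S) hδpos
  have hEdisj' : ∀ l m : ℕ, l ≠ m → Disjoint (E l) (E m) := fun l m h =>
    h.lt_or_gt.elim (hEdisj l m) (fun h' => (hEdisj m l h').symm)
  -- choose k
  set A : ℕ → Set S := fun j => ⋃ m ∈ Finset.range j, E m with hAdef
  have hAmeas : ∀ j, MeasurableSet (A j) :=
    fun j => Finset.measurableSet_biUnion _ (fun m _ => hEmeas m)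
  have hAcompl_tend : Tendsto (fun j => (P : Measure S) ((A j)ᶜ)) atTop (𝓝 0) := by
    have h1 : Antitone (fun j => (A j)ᶜ) := by
      intro a b hab
      apply Set.compl_subset_compl.2
      exact Set.biUnion_subset_biUnion_left (Finset.range_subset_range.2 hab)
    have h2 : (⋂ j, (A j)ᶜ) = ∅ := by
      rw [← Set.compl_iUnion]
      rw [Set.compl_empty_iff]
      refine Set.eq_univ_of_forall fun x => ?_
      obtain ⟨m, hm⟩ := Set.mem_iUnion.1 (hEunion ▸ Set.mem_univ x : x ∈ ⋃ m, E m)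
      exact Set.mem_iUnion.2 ⟨m + 1, Set.mem_biUnion (Finset.mem_range.2 (Nat.lt_succ_self m)) hm⟩
    have h3 := tendsto_measure_iInter_atTop (μ := (P : Measure S))
      (fun j => (hAmeas j).compl.nullMeasurableSet) h1 ⟨0, measure_ne_top _ _⟩
    rw [h2] at h3
    rw [measure_empty] at h3; exact h3
  obtain ⟨k, hk⟩ := (hAcompl_tend.eventually (Iio_mem_nhds (ENNReal.ofReal_pos.2 hη))).exists
  replace hk : (P : Measure S) ((A k)ᶜ) < ENNReal.ofReal η := hk
  set R : Set S := (A k)ᶜ with hRdef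
  have hRfront : (P : Measure S) (frontier R) = 0 := by
    rw [hRdef, frontier_compl]
    exact bt_null_frontier_biUnion _ E hEfront k
  have hμR : ((P : Measure S) R).toReal ≤ η :=
    ENNReal.toReal_le_of_le_ofReal hη.le hk.le
  -- portmanteau convergence
  have hconv : ∀ (B : Set S), (P : Measure S) (frontier B) = 0 →
      Tendsto (fun n => ((Pn n : Measure S) B).toReal) atTop
        (𝓝 (((P : Measure S) B).toReal)) := by
    intro B hB
    exact (ENNReal.tendsto_toReal (measure_ne_top _ _)).comp
      (ProbabilityMeasure.tendsto_measure_of_null_frontier_of_tendsto' hweak hB)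
  have hev1 : ∀ᶠ n in atTop, ∀ m ∈ Finset.range k,
      |((Pn n : Measure S) (E m)).toReal - ((P : Measure S) (E m)).toReal| ≤ η/(k+1) := by
    rw [eventually_all_finset]
    intro m _
    have hpos : (0:ℝ) < η/(k+1) := by positivity
    exact ((hconv (E m) (hEfront m)).eventually (eventually_abs_sub_lt _ hpos)).mono
      (fun n h => h.le)
  have hev2 : ∀ᶠ n in atTop, ((Pn n : Measure S) R).toReal ≤ 2*η := by
    refine ((hconv R hRfront).eventually (eventually_abs_sub_lt _ hη)).mono (fun n h => ?_)
    have h2 := (abs_lt.1 h).2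
    linarith
  filter_upwards [hev1, hev2] with n hdiff hνR
  intro i
  set μ : Measure S := (P : Measure S) with hμdef
  set ν : Measure S := ((Pn n : ProbabilityMeasure S) : Measure S) with hνdef
  haveI hPμ : IsProbabilityMeasure μ := P.prop
  haveI hPν : IsProbabilityMeasure ν := (Pn n).prop
  set g : S → H := fun z => F i z - F i x0 with hgdef
  have hgbd : ∀ z : S, ‖g z‖ ≤ C := fun z => hbd i z x0
  have hgmeas : Measurable g := (hFmeas i).sub measurable_const
  have hIntg : ∀ (θ : Measure S), IsProbabilityMeasure θ → Integrable g θ := by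
    intro θ hθ
    exact ⟨hgmeas.aestronglyMeasurable,
      HasFiniteIntegral.of_bounded (C := C) (Eventually.of_forall hgbd)⟩
  have hIntF : ∀ (θ : Measure S), IsProbabilityMeasure θ → Integrable (F i) θ := by
    intro θ hθ
    refine ⟨(hFmeas i).aestronglyMeasurable,
      HasFiniteIntegral.of_bounded (C := C + ‖F i x0‖) (Eventually.of_forall fun z => ?_)⟩
    calc ‖F i z‖ = ‖(F i z - F i x0) + F i x0‖ := by rw [sub_add_cancel]
      _ ≤ ‖F i z - F i x0‖ + ‖F i x0‖ := norm_add_le _ _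
      _ ≤ C + ‖F i x0‖ := by linarith [hbd i z x0]
  have hswap : ∀ (θ : Measure S), IsProbabilityMeasure θ →
      ∫ z, g z ∂θ = (∫ z, F i z ∂θ) - F i x0 := by
    intro θ hθ
    rw [hgdef]
    rw [integral_sub (hIntF θ hθ) (integrable_const _), integral_const, measureReal_def, measure_univ,
      ENNReal.toReal_one, one_smul]
  have hkey0 : (∫ z, F i z ∂ν) - ∫ z, F i z ∂μ = (∫ z, g z ∂ν) - ∫ z, g z ∂μ := by
    rw [hswap ν hPν, hswap μ hPμ]; abel
  have hdecomp : ∀ (θ : Measure S), IsProbabilityMeasure θ →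
      ∫ z, g z ∂θ = (∑ m ∈ Finset.range k, ∫ z in E m, g z ∂θ) + ∫ z in R, g z ∂θ := by
    intro θ hθ
    have h2 := integral_add_compl (hAmeas k) (hIntg θ hθ)
    rw [← h2]
    congr 1
    exact integral_biUnion_finset (Finset.range k) (fun m _ => hEmeas m)
      (fun l _ m _ hlm => hEdisj' l m hlm) (fun m _ => (hIntg θ hθ).integrableOn)
  set Good : ℕ → Prop := fun m => ∀ z ∈ E m, ∀ t ∈ E m, ‖F i z - F i t‖ ≤ ε₁ with hGooddef
  set w : ℕ → ℝ := fun m => if Good m then ε₁ else C with hwdef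
  have hwnn : ∀ m, 0 ≤ w m := by
    intro m; rw [hwdef]; dsimp only; split
    · exact hε₁.le
    · exact hC0
  have hEsubBad : ∀ m, ¬ Good m → E m ⊆
      {x : S | ε₁ ≤ ⨆ z : {z : S // ‖(z : H) - (x : H)‖ < δ},
        ⨆ t : {t : S // ‖(t : H) - (x : H)‖ < δ}, ‖F i (z : S) - F i (t : S)‖} := by
    intro m hm x hx
    have hm' : ¬ (∀ z ∈ E m, ∀ t ∈ E m, ‖F i z - F i t‖ ≤ ε₁) := hm
    push_neg at hm'
    obtain ⟨z, hz, t, ht, hzt⟩ := hm'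
    have hzx : ‖(z : H) - (x : H)‖ < δ := by
      have h3 := hEdiam m z hz x hx
      rwa [Subtype.dist_eq, dist_eq_norm] at h3
    have htx : ‖(t : H) - (x : H)‖ < δ := by
      have h3 := hEdiam m t ht x hx
      rwa [Subtype.dist_eq, dist_eq_norm] at h3
    show ε₁ ≤ _
    refine le_ciSup_of_le ⟨C, ?_⟩ ⟨z, hzx⟩ (le_ciSup_of_le ⟨C, ?_⟩ ⟨t, htx⟩ hzt.le)
    · rintro _ ⟨z', rfl⟩
      exact Real.iSup_le (fun t' => hbd i z' t') hC0
    · rintro _ ⟨t', rfl⟩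
      exact hbd i z t'
  have hperm : ∀ m ∈ Finset.range k, ‖(∫ z in E m, g z ∂ν) - ∫ z in E m, g z ∂μ‖ ≤
      w m * ((ν (E m)).toReal + (μ (E m)).toReal)
        + C * |(ν (E m)).toReal - (μ (E m)).toReal| := by
    intro m _
    rcases Set.eq_empty_or_nonempty (E m) with he | hne'
    · simp only [he, Measure.restrict_empty, integral_zero_measure, sub_self, norm_zero,
        measure_empty, ENNReal.toReal_zero, abs_zero, mul_zero, add_zero, zero_add]
      positivity
    obtain ⟨xm, hxm⟩ := hne'
    set c : H := g xm with hcdef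
    have hcC : ‖c‖ ≤ C := hbd i xm x0
    have hgc : ∀ z ∈ E m, ‖g z - c‖ ≤ w m := by
      intro z hz
      have h4 : g z - c = F i z - F i xm := by
        simp only [hcdef, hgdef]
        abel
      rw [h4, hwdef]; dsimp only; split
      · next hgood => exact hgood z hz xm hxm
      · exact hbd i z xm
    have hkey : ∀ (θ : Measure S), IsProbabilityMeasure θ →
        ∫ z in E m, g z ∂θ = (∫ z in E m, (g z - c) ∂θ) + (θ (E m)).toReal • c := by
      intro θ hθ
      rw [integral_sub (hIntg θ hθ).integrableOn (integrable_const c), setIntegral_const, measureReal_def]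
      abel
    rw [hkey ν hPν, hkey μ hPμ]
    have hre : ((∫ z in E m, (g z - c) ∂ν) + (ν (E m)).toReal • c)
        - ((∫ z in E m, (g z - c) ∂μ) + (μ (E m)).toReal • c)
        = ((∫ z in E m, (g z - c) ∂ν) - (∫ z in E m, (g z - c) ∂μ))
          + ((ν (E m)).toReal - (μ (E m)).toReal) • c := by
      rw [sub_smul]; abel
    rw [hre]
    have hb1 : ∀ (θ : Measure S), IsProbabilityMeasure θ →
        ‖∫ z in E m, (g z - c) ∂θ‖ ≤ w m * (θ (E m)).toReal := fun θ hθ =>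
      norm_setIntegral_le_of_norm_le_const (measure_lt_top θ _) hgc
    calc ‖((∫ z in E m, (g z - c) ∂ν) - (∫ z in E m, (g z - c) ∂μ))
          + ((ν (E m)).toReal - (μ (E m)).toReal) • c‖
        ≤ ‖(∫ z in E m, (g z - c) ∂ν) - (∫ z in E m, (g z - c) ∂μ)‖
          + ‖((ν (E m)).toReal - (μ (E m)).toReal) • c‖ := norm_add_le _ _
      _ ≤ (w m * (ν (E m)).toReal + w m * (μ (E m)).toReal)
          + |(ν (E m)).toReal - (μ (E m)).toReal| * C := by
        refine add_le_add (le_trans (norm_sub_le _ _) (add_le_add (hb1 ν hPν) (hb1 μ hPμ))) ?_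
        rw [norm_smul, Real.norm_eq_abs]
        exact mul_le_mul_of_nonneg_left hcC (abs_nonneg _)
      _ = w m * ((ν (E m)).toReal + (μ (E m)).toReal)
          + C * |(ν (E m)).toReal - (μ (E m)).toReal| := by ring
  have hsum1 : ∀ (θ : Measure S), IsProbabilityMeasure θ →
      ∑ m ∈ Finset.range k, (θ (E m)).toReal ≤ 1 := by
    intro θ hθ
    rw [← ENNReal.toReal_sum (fun m _ => measure_ne_top _ _),
      ← measure_biUnion_finset (fun l _ m _ hlm => hEdisj' l m hlm) (fun m _ => hEmeas m)]
    calc (θ _).toReal ≤ (1:ℝ≥0∞).toReal :=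
        ENNReal.toReal_mono ENNReal.one_ne_top prob_le_one
      _ = 1 := ENNReal.toReal_one
  set Bd : Finset ℕ := (Finset.range k).filter (fun m => ¬ Good m) with hBddef
  have hBdμ : ∑ m ∈ Bd, ((μ : Measure S) (E m)).toReal ≤ η := by
    rw [← ENNReal.toReal_sum (fun m _ => measure_ne_top _ _),
      ← measure_biUnion_finset (fun l _ m _ hlm => hEdisj' l m hlm) (fun m _ => hEmeas m)]
    refine ENNReal.toReal_le_of_le_ofReal hη.le ?_
    refine le_trans (measure_mono ?_) (hBadP i)
    exact Set.iUnion₂_subset fun m hm => hEsubBad m (Finset.mem_filter.1 hm).2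
  have hdall : ∑ m ∈ Finset.range k, |(ν (E m)).toReal - (μ (E m)).toReal| ≤ η := by
    calc ∑ m ∈ Finset.range k, |(ν (E m)).toReal - (μ (E m)).toReal|
        ≤ ∑ m ∈ Finset.range k, η/(k+1) := Finset.sum_le_sum hdiff
      _ = k * (η/(k+1)) := by rw [Finset.sum_const, Finset.card_range, nsmul_eq_mul]
      _ ≤ ((k:ℝ)+1) * (η/(k+1)) := by
        refine mul_le_mul_of_nonneg_right (by linarith) (by positivity)
      _ = η := by field_simp
  have hBdd : ∑ m ∈ Bd, |(ν (E m)).toReal - (μ (E m)).toReal| ≤ η :=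
    le_trans (Finset.sum_le_sum_of_subset_of_nonneg (Finset.filter_subset _ _)
      (fun m _ _ => abs_nonneg _)) hdall
  have hBdν : ∑ m ∈ Bd, (ν (E m)).toReal ≤ 2*η := by
    calc ∑ m ∈ Bd, (ν (E m)).toReal
        ≤ ∑ m ∈ Bd, ((μ (E m)).toReal + |(ν (E m)).toReal - (μ (E m)).toReal|) := by
          refine Finset.sum_le_sum fun m _ => ?_
          have h7 := le_abs_self ((ν (E m)).toReal - (μ (E m)).toReal)
          linarith
      _ = (∑ m ∈ Bd, (μ (E m)).toReal) + ∑ m ∈ Bd, |(ν (E m)).toReal - (μ (E m)).toReal| :=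
          Finset.sum_add_distrib
      _ ≤ η + η := add_le_add hBdμ hBdd
      _ = 2*η := by ring
  have hsum_main : ∑ m ∈ Finset.range k, (w m * ((ν (E m)).toReal + (μ (E m)).toReal)
      + C * |(ν (E m)).toReal - (μ (E m)).toReal|) ≤ (2*ε₁ + 3*C*η) + C*η := by
    rw [Finset.sum_add_distrib]
    refine add_le_add ?_ ?_
    · rw [← Finset.sum_filter_add_sum_filter_not (Finset.range k) Good]
      refine add_le_add ?_ ?_
      · have h5 : ∀ m ∈ (Finset.range k).filter Good,
            w m * ((ν (E m)).toReal + (μ (E m)).toReal)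
              = ε₁ * ((ν (E m)).toReal + (μ (E m)).toReal) := by
          intro m hm
          rw [hwdef]; dsimp only; rw [if_pos (Finset.mem_filter.1 hm).2]
        rw [Finset.sum_congr rfl h5, ← Finset.mul_sum]
        calc ε₁ * ∑ m ∈ (Finset.range k).filter Good, ((ν (E m)).toReal + (μ (E m)).toReal)
            ≤ ε₁ * ∑ m ∈ Finset.range k, ((ν (E m)).toReal + (μ (E m)).toReal) := by
              refine mul_le_mul_of_nonneg_left (Finset.sum_le_sum_of_subset_of_nonneg
                (Finset.filter_subset _ _) (fun m _ _ => by positivity)) hε₁.le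
          _ ≤ ε₁ * (1 + 1) := by
              rw [Finset.sum_add_distrib]
              exact mul_le_mul_of_nonneg_left (add_le_add (hsum1 ν hPν) (hsum1 μ hPμ)) hε₁.le
          _ = 2*ε₁ := by ring
      · have h5 : ∀ m ∈ Bd, w m * ((ν (E m)).toReal + (μ (E m)).toReal)
            = C * ((ν (E m)).toReal + (μ (E m)).toReal) := by
          intro m hm
          rw [hwdef]; dsimp only; rw [if_neg (Finset.mem_filter.1 hm).2]
        rw [show (Finset.range k).filter (fun m => ¬ Good m) = Bd from rfl,
          Finset.sum_congr rfl h5, ← Finset.mul_sum]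
        calc C * ∑ m ∈ Bd, ((ν (E m)).toReal + (μ (E m)).toReal)
            = C * ((∑ m ∈ Bd, (ν (E m)).toReal) + ∑ m ∈ Bd, (μ (E m)).toReal) := by
              rw [Finset.sum_add_distrib]
          _ ≤ C * (2*η + η) := mul_le_mul_of_nonneg_left (add_le_add hBdν hBdμ) hC0
          _ = 3*C*η := by ring
    · rw [← Finset.mul_sum]
      exact mul_le_mul_of_nonneg_left hdall hC0
  have hRbound : ‖(∫ z in R, g z ∂ν) - ∫ z in R, g z ∂μ‖ ≤ C*(2*η) + C*η := by
    refine le_trans (norm_sub_le _ _) (add_le_add ?_ ?_)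
    · calc ‖∫ z in R, g z ∂ν‖ ≤ C * (ν R).toReal :=
          norm_setIntegral_le_of_norm_le_const (measure_lt_top _ _) (fun z _ => hgbd z)
        _ ≤ C * (2*η) := mul_le_mul_of_nonneg_left hνR hC0
    · calc ‖∫ z in R, g z ∂μ‖ ≤ C * (μ R).toReal :=
          norm_setIntegral_le_of_norm_le_const (measure_lt_top _ _) (fun z _ => hgbd z)
        _ ≤ C * η := mul_le_mul_of_nonneg_left hμR hC0
  rw [hkey0, hdecomp ν hPν, hdecomp μ hPμ]
  have hre2 : ((∑ m ∈ Finset.range k, ∫ z in E m, g z ∂ν) + ∫ z in R, g z ∂ν)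
      - ((∑ m ∈ Finset.range k, ∫ z in E m, g z ∂μ) + ∫ z in R, g z ∂μ)
      = (∑ m ∈ Finset.range k, ((∫ z in E m, g z ∂ν) - ∫ z in E m, g z ∂μ))
        + ((∫ z in R, g z ∂ν) - ∫ z in R, g z ∂μ) := by
    rw [Finset.sum_sub_distrib]; abel
  rw [hre2]
  have heq : η * (16*(C+1)) = ε := by
    rw [hηdef]; field_simp
  calc ‖(∑ m ∈ Finset.range k, ((∫ z in E m, g z ∂ν) - ∫ z in E m, g z ∂μ))
        + ((∫ z in R, g z ∂ν) - ∫ z in R, g z ∂μ)‖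
      ≤ (∑ m ∈ Finset.range k, ‖(∫ z in E m, g z ∂ν) - ∫ z in E m, g z ∂μ‖)
        + ‖(∫ z in R, g z ∂ν) - ∫ z in R, g z ∂μ‖ :=
        le_trans (norm_add_le _ _) (add_le_add (norm_sum_le _ _) le_rfl)
    _ ≤ ((2*ε₁ + 3*C*η) + C*η) + (C*(2*η) + C*η) := by
        refine add_le_add (le_trans (Finset.sum_le_sum hperm) hsum_main) hRbound
    _ < ε := by
        have h8 : 0 ≤ C*η := mul_nonneg hC0 hη.le
        nlinarith [hη, hε]
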